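/- For every n ≥ 1, every normal natural deduction proof of φ_n in M→ has size (number of formula occurrences in the derivation tree) at least 2^n; consequently the minimal size of normal proofs of the formulas φ_n grows at least exponentially in n. -/

import Mathlib

/-- Formulas of purely implicational logic, built from atoms (numbered by `ℕ`)
by the single connective `→` (`impl`). -/
inductive Fm : Type
  | atom : ℕ → Fm
  | impl : Fm → Fm → Fm
deriving DecidableEq

/-- χ[X,Y] = (((X → Y) → X) → X) → Y. -/
def chi (X Y : Fm) : Fm := (((X.impl Y).impl X).impl X).impl Y

/-- The atom `Fm.atom 0` is C, and `Fm.atom k` is D_k for k ≥ 1.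
ξ₁ = χ[D₁, C] and ξ_{i+1} = χ[D_{i+1}, ξ_i]  (the value at 0 is irrelevant). -/
def xi : ℕ → Fm
  | 0 => chi (.atom 1) (.atom 0)
  | 1 => chi (.atom 1) (.atom 0)
  | n + 2 => chi (.atom (n + 2)) (xi (n + 1))

/-- φ_n = ξ_n → C. -/
def phi (n : ℕ) : Fm := (xi n).impl (.atom 0)

/-- Natural deduction derivations for M→, indexed by the multiset of open
assumption occurrences and the conclusion.  `assume a` is a one-occurrence
assumption of `a`; `intro n` is →-introduction discharging exactly `n`
occurrences of the assumption `a`; `elim` is →-elimination whose second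
premise (the implication) is the major premise. -/
inductive Deriv : Multiset Fm → Fm → Type
  | assume (a : Fm) : Deriv {a} a
  | intro {Γ : Multiset Fm} {a b : Fm} (n : ℕ)
      (d : Deriv (Γ + Multiset.replicate n a) b) : Deriv Γ (a.impl b)
  | elim {Γ Δ : Multiset Fm} {a b : Fm}
      (minor : Deriv Γ a) (major : Deriv Δ (a.impl b)) : Deriv (Γ + Δ) b

/-- The last rule of the derivation is an →-introduction. -/
def Deriv.isIntro : ∀ {Γ b}, Deriv Γ b → Prop
  | _, _, .intro _ _ => True
  | _, _, _ => False

/-- A derivation is normal if no formula occurrence is both the conclusion of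
an →-introduction and the major premise of an →-elimination. -/
def Deriv.normal : ∀ {Γ b}, Deriv Γ b → Prop
  | _, _, .assume _ => True
  | _, _, .intro _ d => d.normal
  | _, _, .elim minor major => minor.normal ∧ major.normal ∧ ¬ major.isIntro

/-- Size of a derivation: the number of formula occurrences in the tree. -/
def Deriv.size : ∀ {Γ b}, Deriv Γ b → ℕ
  | _, _, .assume _ => 1
  | _, _, .intro _ d => Deriv.size d + 1
  | _, _, .elim minor major => Deriv.size minor + Deriv.size major + 1

-- ===== auxiliary definitions =====

/-- ZZ j = C if j = 0 else ξ_j. -/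
def ZZ (j : ℕ) : Fm := if j = 0 then .atom 0 else xi j

/-- F_m = D_m → ξ_{m-1}. -/
def FF (m : ℕ) : Fm := (Fm.atom m).impl (ZZ (m-1))

/-- B_m = (D_m → ξ_{m-1}) → D_m. -/
def BB (m : ℕ) : Fm := (FF m).impl (.atom m)

/-- A_m = B_m → D_m. -/
def AA (m : ℕ) : Fm := (BB m).impl (.atom m)

lemma xi_eq : ∀ {m : ℕ}, 1 ≤ m → xi m = (AA m).impl (ZZ (m-1))
  | 1, _ => rfl
  | (m+2), _ => by simp [xi, chi, AA, BB, FF, ZZ]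

lemma ZZ_zero : ZZ 0 = Fm.atom 0 := rfl

lemma ZZ_succ {j : ℕ} (hj : 1 ≤ j) : ZZ j = (AA j).impl (ZZ (j-1)) := by
  unfold ZZ; rw [if_neg (by omega)]; exact xi_eq hj

lemma ZZ_eq_xi {n : ℕ} (hn : 1 ≤ n) : ZZ n = xi n := by
  unfold ZZ; rw [if_neg (by omega)]

def fsz : Fm → ℕ
  | .atom _ => 1
  | .impl a b => fsz a + fsz b + 1

lemma fsz_ZZ_mono : StrictMono (fun j => fsz (ZZ j)) := by
  apply strictMono_nat_of_lt_succ
  intro j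
  rw [ZZ_succ (j := j+1) (by omega)]
  simp [fsz]

lemma ZZ_inj {j j' : ℕ} (h : ZZ j = ZZ j') : j = j' :=
  fsz_ZZ_mono.injective (by rw [h])

-- ===== distinctness lemmas =====
lemma AA_ne_FF {m i : ℕ} : AA m ≠ FF i := by simp [AA, BB, FF]
lemma BB_ne_FF {m i : ℕ} : BB m ≠ FF i := by simp [AA, BB, FF]
lemma AA_ne_BB {m i : ℕ} : AA m ≠ BB i := by simp [AA, BB, FF]
lemma AA_ne_atom {m i : ℕ} : AA m ≠ .atom i := by simp [AA]
lemma BB_ne_atom {m i : ℕ} : BB m ≠ .atom i := by simp [BB]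
lemma FF_ne_atom {m i : ℕ} : FF m ≠ .atom i := by simp [FF]

lemma ZZ_ne_AA {j i : ℕ} : ZZ j ≠ AA i := by
  rcases Nat.eq_zero_or_pos j with h | h
  · subst h; simp [ZZ_zero, AA]
  · rw [ZZ_succ h]; simp [AA, BB, FF]
lemma ZZ_ne_BB {j i : ℕ} : ZZ j ≠ BB i := by
  rcases Nat.eq_zero_or_pos j with h | h
  · subst h; simp [ZZ_zero, BB]
  · rw [ZZ_succ h]; simp [AA, BB, FF]
lemma ZZ_ne_FF {j i : ℕ} : ZZ j ≠ FF i := by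
  rcases Nat.eq_zero_or_pos j with h | h
  · subst h; simp [ZZ_zero, FF]
  · rw [ZZ_succ h]; simp [AA, BB, FF]
lemma ZZ_ne_atom {j i : ℕ} (hi : 1 ≤ i) : ZZ j ≠ .atom i := by
  rcases Nat.eq_zero_or_pos j with h | h
  · subst h; simp [ZZ_zero]; omega
  · rw [ZZ_succ h]; simp

lemma AA_inj {m i : ℕ} (h : AA m = AA i) : m = i := by
  simp [AA, BB, FF] at h; exact h.2
lemma BB_inj {m i : ℕ} (h : BB m = BB i) : m = i := by
  simp [BB, FF] at h; exact h.2

-- ===== bounds =====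
def Ebd (n t : ℕ) : ℕ := 5 * (2 ^ (n - t) - 1)
def Gbd (n m : ℕ) : ℕ := 5 * 2 ^ (n - m)
def WBbd (n j t : ℕ) : ℕ := 1 + (n - j) + Ebd n (max j t)

-- ===== context predicates =====
/-- allowed context at stage t : copies of ξ_n, A_i (1 ≤ i < t), B_i and D_i (1 ≤ i ≤ t). -/
def Qc (n t : ℕ) (Γ : Multiset Fm) : Prop :=
  ∀ g ∈ Γ, g = xi n ∨ (∃ i, 1 ≤ i ∧ i < t ∧ g = AA i) ∨
    (∃ i, 1 ≤ i ∧ i ≤ t ∧ (g = BB i ∨ g = Fm.atom i))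

/-- context for the D_m-goal: ξ_n, A_i/B_i/D_i (i < m), and B_m (but no D_m, no A_m). -/
def QD (n m : ℕ) (Γ : Multiset Fm) : Prop :=
  ∀ g ∈ Γ, g = xi n ∨ (∃ i, 1 ≤ i ∧ i < m ∧ (g = AA i ∨ g = BB i ∨ g = Fm.atom i)) ∨ g = BB m

lemma Qc_mono_t {n t t' : ℕ} (h : t ≤ t') {Γ} (hQ : Qc n t Γ) : Qc n t' Γ := by
  intro g hg
  rcases hQ g hg with h1 | ⟨i, h1, h2, h3⟩ | ⟨i, h1, h2, h3⟩
  · exact Or.inl h1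
  · exact Or.inr (Or.inl ⟨i, h1, by omega, h3⟩)
  · exact Or.inr (Or.inr ⟨i, h1, by omega, h3⟩)

lemma Qc_mono_le {n t : ℕ} {Γ Δ : Multiset Fm} (h : Δ ≤ Γ) (hQ : Qc n t Γ) : Qc n t Δ :=
  fun g hg => hQ g (Multiset.mem_of_le h hg)

lemma QD_to_Qc {n m : ℕ} (hm : 1 ≤ m) {Γ} (hQ : QD n m Γ) : Qc n m Γ := by
  intro g hg
  rcases hQ g hg with h1 | ⟨i, h1, h2, h3 | h3 | h3⟩ | h1
  · exact Or.inl h1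
  · exact Or.inr (Or.inl ⟨i, h1, h2, h3⟩)
  · exact Or.inr (Or.inr ⟨i, h1, by omega, Or.inl h3⟩)
  · exact Or.inr (Or.inr ⟨i, h1, by omega, Or.inr h3⟩)
  · exact Or.inr (Or.inr ⟨m, hm, le_rfl, Or.inl h1⟩)

lemma size_pos {Γ b} (d : Deriv Γ b) : 1 ≤ d.size := by
  cases d <;> simp [Deriv.size]

-- ===== spine machinery =====
/-- `Spine Γ h c s` : there is an elimination spine with head formula `h`,
final conclusion `c`, total accounted size `s`, all minors normal with
contexts contained in `Γ`. -/
inductive Spine (Γ : Multiset Fm) : Fm → Fm → ℕ → Prop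
  | nil (c : Fm) : Spine Γ c c 1
  | cons {h a c : Fm} {s : ℕ} {Δ : Multiset Fm} (hΔ : Δ ≤ Γ) (e : Deriv Δ a)
      (he : e.normal) (tail : Spine Γ h (a.impl c) s) : Spine Γ h c (s + e.size + 1)

lemma Spine.mono {Γ Γ' : Multiset Fm} (hΓ : Γ ≤ Γ') {h c s} (sp : Spine Γ h c s) :
    Spine Γ' h c s := by
  induction sp with
  | nil => exact Spine.nil _
  | cons hΔ e he tail ih => exact Spine.cons (le_trans hΔ hΓ) e he ih

lemma spine_of_normal : ∀ {Γ c} (d : Deriv Γ c), d.normal → ¬ d.isIntro →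
    ∃ h s, h ∈ Γ ∧ Spine Γ h c s ∧ s ≤ d.size := by
  intro Γ c d
  induction d with
  | assume a =>
    intro _ _
    exact ⟨a, 1, by simp, Spine.nil a, le_rfl⟩
  | intro k d ih =>
    intro _ hI
    exact absurd trivial hI
  | elim minor major ihminor ihmajor =>
    intro hn _
    obtain ⟨h1, h2, h3⟩ := hn
    obtain ⟨h, s, hmem, sp, hs⟩ := ihmajor h2 h3
    refine ⟨h, s + minor.size + 1, ?_, ?_, ?_⟩
    · exact Multiset.mem_add.2 (Or.inr hmem)
    · exact Spine.cons (show _ ≤ _ from Multiset.le_add_right _ _) minor h1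
        (sp.mono (Multiset.le_add_left _ _))
    · simp [Deriv.size]; omega

lemma spine_atom {Γ : Multiset Fm} {i : ℕ} : ∀ {c s}, Spine Γ (.atom i) c s → c = .atom i := by
  intro c s sp
  induction sp with
  | nil => rfl
  | cons hΔ e he tail ih => exact absurd ih (by simp)

lemma spine_AA {Γ : Multiset Fm} {m : ℕ} : ∀ {c s}, Spine Γ (AA m) c s →
    c = AA m ∨ c = .atom m := by
  intro c s sp
  induction sp with
  | nil => exact Or.inl rfl
  | cons hΔ e he tail ih =>
    rcases ih with h | h
    · right; rw [AA] at h
      exact (Fm.impl.inj h).2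
    · exact absurd h (by simp)

lemma spine_BB {Γ : Multiset Fm} {m : ℕ} : ∀ {c s}, Spine Γ (BB m) c s →
    (c = BB m ∧ s = 1) ∨
    (c = .atom m ∧ ∃ Δ, ∃ e : Deriv Δ (FF m), Δ ≤ Γ ∧ e.normal ∧ e.size + 2 ≤ s) := by
  intro c s sp
  induction sp with
  | nil => exact Or.inl ⟨rfl, rfl⟩
  | cons hΔ e he tail ih =>
    rcases ih with ⟨h, hs⟩ | ⟨h, _⟩
    · right
      rw [BB] at h
      obtain ⟨ha, hc⟩ := Fm.impl.inj h
      subst hs ha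
      exact ⟨hc, _, e, hΔ, he, by omega⟩
    · exact absurd h (by simp)

lemma Spine.one_le {Γ h c s} (sp : Spine Γ h c s) : 1 ≤ s := by
  induction sp with
  | nil => exact le_rfl
  | cons _ _ _ _ _ => omega

lemma spine_xi {n N t : ℕ} (hn : 1 ≤ n)
    (IH2 : ∀ {Δ a} (e : Deriv Δ a), e.size < N → e.normal →
      ∀ m, 1 ≤ m → m ≤ n → a = AA m → Qc n (m-1) Δ → Gbd n m ≤ e.size)
    {Γ : Multiset Fm} (hQ : Qc n t Γ) :
    ∀ {c s}, Spine Γ (xi n) c s → s ≤ N → ∃ j, j ≤ n ∧ c = ZZ j ∧ WBbd n j t ≤ s := by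
  intro c s sp
  induction sp with
  | nil =>
    intro _
    refine ⟨n, le_rfl, (ZZ_eq_xi hn).symm, ?_⟩
    have e1 : n - max n t = 0 := by omega
    simp [WBbd, Ebd, e1]
  | @cons a c s' Δ hΔ e he tail ih =>
    intro hsN
    have hs'1 : 1 ≤ s' := tail.one_le
    obtain ⟨j', hj'n, heq, hW⟩ := ih (by omega)
    have hj'1 : 1 ≤ j' := by
      by_contra hcon
      have : j' = 0 := by omega
      subst this
      rw [ZZ_zero] at heq
      exact absurd heq (by simp)
    rw [ZZ_succ hj'1] at heq
    obtain ⟨ha, hc⟩ := Fm.impl.inj heq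
    subst ha
    refine ⟨j' - 1, by omega, hc, ?_⟩
    rcases le_or_gt (t + 1) j' with hcase | hcase
    · have hGe : Gbd n j' ≤ e.size := by
        apply IH2 e (by omega) he j' hj'1 hj'n rfl
        exact Qc_mono_t (by omega) (Qc_mono_le hΔ hQ)
      have e1 : max j' t = j' := by omega
      have e2 : max (j' - 1) t = j' - 1 := by omega
      have e3 : n - (j' - 1) = (n - j') + 1 := by omega
      have hx : 1 ≤ 2 ^ (n - j') := Nat.one_le_two_pow
      simp only [WBbd, Ebd, Gbd, e1, e2, e3, pow_succ] at *
      omega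
    · have he1 : 1 ≤ e.size := size_pos e
      have e1 : max j' t = t := by omega
      have e2 : max (j' - 1) t = t := by omega
      simp only [WBbd, Ebd, e1, e2] at *
      omega

/-- The master lower-bound lemma, by strong induction on size:
 (1) goal ZZ j (ξ_j, or C when j = 0), context Qc t  ⇒  size ≥ 1 + E t
 (2) goal A_m, context Qc (m-1)                      ⇒  size ≥ G m
 (3) goal D_m, context QD m                          ⇒  size ≥ G m - 1
 (4) goal F_m, context Qc m                          ⇒  size ≥ G m - 3 -/
lemma master (n : ℕ) (hn : 1 ≤ n) : ∀ (N : ℕ), ∀ {Γ b} (d : Deriv Γ b), d.size ≤ N → d.normal →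
    (∀ j t, j + 1 ≤ n → (j = 0 ∨ j + 1 ≤ t) → b = ZZ j → Qc n t Γ → 1 + Ebd n t ≤ d.size) ∧
    (∀ m, 1 ≤ m → m ≤ n → b = AA m → Qc n (m-1) Γ → Gbd n m ≤ d.size) ∧
    (∀ m, 1 ≤ m → m ≤ n → b = Fm.atom m → QD n m Γ → Gbd n m - 1 ≤ d.size) ∧
    (∀ m, 1 ≤ m → m ≤ n → b = FF m → Qc n m Γ → Gbd n m - 3 ≤ d.size) := by
  intro N
  induction N using Nat.strong_induction_on with
  | _ N IH =>
  intro Γ b d hdN hdnorm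
  have IH1 : ∀ {Δ a} (e : Deriv Δ a), e.size < N → e.normal →
      ∀ j t, j + 1 ≤ n → (j = 0 ∨ j + 1 ≤ t) → a = ZZ j → Qc n t Δ → 1 + Ebd n t ≤ e.size :=
    fun e hlt hne => (IH e.size hlt e le_rfl hne).1
  have IH2 : ∀ {Δ a} (e : Deriv Δ a), e.size < N → e.normal →
      ∀ m, 1 ≤ m → m ≤ n → a = AA m → Qc n (m-1) Δ → Gbd n m ≤ e.size :=
    fun e hlt hne => (IH e.size hlt e le_rfl hne).2.1
  have IH3 : ∀ {Δ a} (e : Deriv Δ a), e.size < N → e.normal →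
      ∀ m, 1 ≤ m → m ≤ n → a = Fm.atom m → QD n m Δ → Gbd n m - 1 ≤ e.size :=
    fun e hlt hne => (IH e.size hlt e le_rfl hne).2.2.1
  have IH4 : ∀ {Δ a} (e : Deriv Δ a), e.size < N → e.normal →
      ∀ m, 1 ≤ m → m ≤ n → a = FF m → Qc n m Δ → Gbd n m - 3 ≤ e.size :=
    fun e hlt hne => (IH e.size hlt e le_rfl hne).2.2.2
  refine ⟨?_, ?_, ?_, ?_⟩
  -- ==================== Claim 1 : goal ZZ j ====================
  · intro j t hjn hjt hb hQ
    cases d with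
    | assume a =>
      exfalso
      subst hb
      rcases hQ _ (Multiset.mem_singleton_self _) with h | ⟨i, hi1, hi2, hi3⟩ |
        ⟨i, hi1, hi2, hi3 | hi3⟩
      · rw [← ZZ_eq_xi hn] at h
        have := ZZ_inj h
        omega
      · exact ZZ_ne_AA hi3
      · exact ZZ_ne_BB hi3
      · exact ZZ_ne_atom hi1 hi3
    | intro k d' =>
      have hj1 : 1 ≤ j := by
        by_contra hcon
        have : j = 0 := by omega
        subst this
        exact absurd hb (by simp [ZZ_zero])
      have hjt' : j + 1 ≤ t := by rcases hjt with h | h; omega; exact h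
      rw [ZZ_succ hj1] at hb
      obtain ⟨ha, hb0⟩ := Fm.impl.inj hb
      subst ha hb0
      simp only [Deriv.normal] at hdnorm
      simp only [Deriv.size] at hdN ⊢
      have hQ' : Qc n t (Γ + Multiset.replicate k (AA j)) := by
        intro g hg
        rcases Multiset.mem_add.1 hg with h | h
        · exact hQ g h
        · rw [Multiset.eq_of_mem_replicate h]
          exact Or.inr (Or.inl ⟨j, hj1, by omega, rfl⟩)
      have := IH1 d' (by omega) hdnorm (j-1) t (by omega)
        (by rcases Nat.eq_zero_or_pos (j-1) with h | h
            · exact Or.inl h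
            · exact Or.inr (by omega)) rfl hQ'
      omega
    | elim minor major =>
      obtain ⟨h, s, hmem, sp, hs⟩ :=
        spine_of_normal (Deriv.elim minor major) hdnorm (by simp [Deriv.isIntro])
      simp only [Deriv.size] at hdN hs ⊢
      rcases hQ _ hmem with hh | ⟨i, hi1, hi2, hi3⟩ | ⟨i, hi1, hi2, hi3 | hi3⟩
      · subst hh
        obtain ⟨j2, hj2n, hceq, hW⟩ := spine_xi hn IH2 hQ sp (by omega)
        rw [hb] at hceq
        have hjj : j = j2 := ZZ_inj hceq
        subst hjj
        have e1 : max j t = t := by omega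
        simp only [WBbd, e1] at hW
        omega
      · subst hi3
        rcases spine_AA sp with h | h
        · exact absurd (hb ▸ h) ZZ_ne_AA
        · exact absurd (hb ▸ h) (ZZ_ne_atom hi1)
      · subst hi3
        rcases spine_BB sp with ⟨h, _⟩ | ⟨h, _⟩
        · exact absurd (hb ▸ h) ZZ_ne_BB
        · exact absurd (hb ▸ h) (ZZ_ne_atom hi1)
      · subst hi3
        exact absurd (hb ▸ spine_atom sp) (ZZ_ne_atom hi1)
  -- ==================== Claim 2 : goal A_m ====================
  · intro m hm hmn hb hQ
    cases d with
    | assume a =>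
      exfalso
      subst hb
      rcases hQ _ (Multiset.mem_singleton_self _) with h | ⟨i, hi1, hi2, hi3⟩ |
        ⟨i, hi1, hi2, hi3 | hi3⟩
      · rw [← ZZ_eq_xi hn] at h
        exact ZZ_ne_AA h.symm
      · have := AA_inj hi3
        omega
      · exact AA_ne_BB hi3
      · exact AA_ne_atom hi3
    | intro k d' =>
      rw [AA] at hb
      obtain ⟨ha, hb0⟩ := Fm.impl.inj hb
      subst ha hb0
      simp only [Deriv.normal] at hdnorm
      simp only [Deriv.size] at hdN ⊢
      have hQ' : QD n m (Γ + Multiset.replicate k (BB m)) := by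
        intro g hg
        rcases Multiset.mem_add.1 hg with h | h
        · rcases hQ g h with h1 | ⟨i, hi1, hi2, hi3⟩ | ⟨i, hi1, hi2, hi3⟩
          · exact Or.inl h1
          · exact Or.inr (Or.inl ⟨i, hi1, by omega, Or.inl hi3⟩)
          · exact Or.inr (Or.inl ⟨i, hi1, by omega, by tauto⟩)
        · rw [Multiset.eq_of_mem_replicate h]
          exact Or.inr (Or.inr rfl)
      have := IH3 d' (by omega) hdnorm m hm hmn rfl hQ'
      have hx : 1 ≤ 2 ^ (n - m) := Nat.one_le_two_pow
      simp only [Gbd] at *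
      omega
    | elim minor major =>
      exfalso
      obtain ⟨h, s, hmem, sp, hs⟩ :=
        spine_of_normal (Deriv.elim minor major) hdnorm (by simp [Deriv.isIntro])
      rcases hQ _ hmem with hh | ⟨i, hi1, hi2, hi3⟩ | ⟨i, hi1, hi2, hi3 | hi3⟩
      · subst hh
        obtain ⟨j2, hj2n, hceq, hW⟩ := spine_xi hn IH2 hQ sp
          (by simp only [Deriv.size] at hdN hs; omega)
        exact ZZ_ne_AA (hceq.symm.trans hb)
      · subst hi3
        rcases spine_AA sp with h | h
        · have := AA_inj ((hb ▸ h : AA m = AA i))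
          omega
        · exact AA_ne_atom (hb ▸ h)
      · subst hi3
        rcases spine_BB sp with ⟨h, _⟩ | ⟨h, _⟩
        · exact AA_ne_BB (hb ▸ h)
        · exact AA_ne_atom (hb ▸ h)
      · subst hi3
        exact AA_ne_atom (hb ▸ spine_atom sp)
  -- ==================== Claim 3 : goal D_m ====================
  · intro m hm hmn hb hQ
    cases d with
    | assume a =>
      exfalso
      subst hb
      rcases hQ _ (Multiset.mem_singleton_self _) with h | ⟨i, hi1, hi2, hi3 | hi3 | hi3⟩ | h
      · rw [← ZZ_eq_xi hn] at h
        exact ZZ_ne_atom hm h.symm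
      · exact AA_ne_atom hi3.symm
      · exact BB_ne_atom hi3.symm
      · have := Fm.atom.inj hi3
        omega
      · exact BB_ne_atom h.symm
    | intro k d' =>
      exact absurd hb (by simp)
    | elim minor major =>
      obtain ⟨h, s, hmem, sp, hs⟩ :=
        spine_of_normal (Deriv.elim minor major) hdnorm (by simp [Deriv.isIntro])
      simp only [Deriv.size] at hdN hs ⊢
      have hQc := QD_to_Qc hm hQ
      rcases hQ _ hmem with hh | ⟨i, hi1, hi2, hi3 | hi3 | hi3⟩ | hh
      · exfalso
        subst hh
        obtain ⟨j2, hj2n, hceq, hW⟩ := spine_xi hn IH2 hQc sp (by omega)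
        exact ZZ_ne_atom hm (hceq.symm.trans hb)
      · exfalso
        subst hi3
        rcases spine_AA sp with h | h
        · exact AA_ne_atom ((hb ▸ h).symm)
        · have := Fm.atom.inj (hb ▸ h)
          omega
      · exfalso
        subst hi3
        rcases spine_BB sp with ⟨h, _⟩ | ⟨h, _⟩
        · exact BB_ne_atom ((hb ▸ h).symm)
        · have := Fm.atom.inj (hb ▸ h)
          omega
      · exfalso
        subst hi3
        have := Fm.atom.inj (hb ▸ spine_atom sp)
        omega
      · subst hh
        rcases spine_BB sp with ⟨h, _⟩ | ⟨_, Δ, e, hΔle, henorm, hesz⟩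
        · exact absurd ((hb ▸ h).symm) BB_ne_atom
        · have := IH4 e (by omega) henorm m hm hmn rfl (Qc_mono_le hΔle hQc)
          have hx : 1 ≤ 2 ^ (n - m) := Nat.one_le_two_pow
          simp only [Gbd] at *
          omega
  -- ==================== Claim 4 : goal F_m ====================
  · intro m hm hmn hb hQ
    cases d with
    | assume a =>
      exfalso
      subst hb
      rcases hQ _ (Multiset.mem_singleton_self _) with h | ⟨i, hi1, hi2, hi3⟩ |
        ⟨i, hi1, hi2, hi3 | hi3⟩
      · rw [← ZZ_eq_xi hn] at h
        exact ZZ_ne_FF h.symm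
      · exact AA_ne_FF hi3.symm
      · exact BB_ne_FF hi3.symm
      · exact FF_ne_atom hi3
    | intro k d' =>
      rw [FF] at hb
      obtain ⟨ha, hb0⟩ := Fm.impl.inj hb
      subst ha hb0
      simp only [Deriv.normal] at hdnorm
      simp only [Deriv.size] at hdN ⊢
      have hQ' : Qc n m (Γ + Multiset.replicate k (Fm.atom m)) := by
        intro g hg
        rcases Multiset.mem_add.1 hg with h | h
        · exact hQ g h
        · rw [Multiset.eq_of_mem_replicate h]
          exact Or.inr (Or.inr ⟨m, hm, le_rfl, Or.inr rfl⟩)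
      have := IH1 d' (by omega) hdnorm (m-1) m (by omega)
        (by rcases Nat.eq_zero_or_pos (m-1) with h | h
            · exact Or.inl h
            · exact Or.inr (by omega)) rfl hQ'
      have hx : 1 ≤ 2 ^ (n - m) := Nat.one_le_two_pow
      simp only [Gbd, Ebd] at *
      omega
    | elim minor major =>
      exfalso
      obtain ⟨h, s, hmem, sp, hs⟩ :=
        spine_of_normal (Deriv.elim minor major) hdnorm (by simp [Deriv.isIntro])
      rcases hQ _ hmem with hh | ⟨i, hi1, hi2, hi3⟩ | ⟨i, hi1, hi2, hi3 | hi3⟩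
      · subst hh
        obtain ⟨j2, hj2n, hceq, hW⟩ := spine_xi hn IH2 hQ sp
          (by simp only [Deriv.size] at hdN hs; omega)
        exact ZZ_ne_FF (hceq.symm.trans hb)
      · subst hi3
        rcases spine_AA sp with h | h
        · exact AA_ne_FF (hb ▸ h).symm
        · exact FF_ne_atom (hb ▸ h)
      · subst hi3
        rcases spine_BB sp with ⟨h, _⟩ | ⟨h, _⟩
        · exact BB_ne_FF (hb ▸ h).symm
        · exact FF_ne_atom (hb ▸ h)
      · subst hi3
        exact FF_ne_atom (hb ▸ spine_atom sp)

lemma intro_inv {Γ : Multiset Fm} {a b : Fm} (d : Deriv Γ (a.impl b)) (hI : d.isIntro) :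
    ∃ k, ∃ d' : Deriv (Γ + Multiset.replicate k a) b,
      (d.normal → d'.normal) ∧ d.size = d'.size + 1 := by
  cases d with
  | assume c => exact absurd hI (by simp [Deriv.isIntro])
  | intro k d' => exact ⟨k, d', fun h => h, by simp [Deriv.size]⟩
  | elim minor major => exact absurd hI (by simp [Deriv.isIntro])


/-- every normal proof of φ_n (n ≥ 1) has size at least 2^n;
hence the minimal size of normal proofs of the φ_n grows at least
exponentially in n. -/
theorem lower_bound_size (n : ℕ) (hn : 1 ≤ n)
    (d : Deriv (0 : Multiset Fm) (phi n)) (hd : d.normal) :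
    2 ^ n ≤ d.size := by
  by_cases hI : d.isIntro
  · obtain ⟨k, d', hnorm, hsz⟩ := intro_inv (a := xi n) (b := .atom 0) d hI
    have hQ : Qc n 0 ((0 : Multiset Fm) + Multiset.replicate k (xi n)) := by
      intro g hg
      rw [zero_add] at hg
      exact Or.inl (Multiset.eq_of_mem_replicate hg)
    have hb : (Fm.atom 0) = ZZ 0 := rfl
    have := (master n hn d'.size d' le_rfl (hnorm hd)).1 0 0 hn (Or.inl rfl) hb hQ
    have hx : 1 ≤ 2 ^ n := Nat.one_le_two_pow
    have hE : Ebd n 0 = 5 * (2 ^ n - 1) := by simp [Ebd]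
    have hsz' : d.size = d'.size + 1 := hsz
    rw [hsz']; rw [hE] at this; generalize 2 ^ n = x at *; omega
  · obtain ⟨h, s, hmem, _, _⟩ := spine_of_normal d hd hI
    exact absurd hmem (by simp)
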